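/- Let M ∈ ℝ^{s×(s−d)} and B ∈ ℝ^{s×(s−d)} be matrices of full column rank s−d, and let M^⊥, B^⊥ ∈ ℝ^{d×s} have rows forming bases of the orthogonal complements of the column spans of M and B respectively. Define the four sign sets Σ = {sign(det(Mᵀ_I) det(Bᵀ_I)) : I ⊆ [s], #I = s−d}, Σ^⊥ = {sign((−1)^{ν(J)} det(M^⊥_J) det(Bᵀ_{J^c})) : #J = d}, Σ_⊥ = {sign((−1)^{ν(J)} det(Mᵀ_{J^c}) det(B^⊥_J)) : #J = d}, and Σ^⊥_⊥ = {sign(det(M^⊥_J) det(B^⊥_J)) : #J = d}, where ν(J) = ∑_{j∈J} j. Then if any one of these four sets is different from {0}, all four are; and in that case, if any one of them contains both +1 and −1, then all four do. -/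

import Mathlib

open Matrix

section Stmt12Aux

open Equiv


variable {s d : ℕ}

private def eqv (hd : d ≤ s) : (Fin d ⊕ Fin (s - d)) ≃ Fin s :=
  finSumFinEquiv.trans (finCongr (by omega))

private noncomputable def uJ (J : Finset (Fin s)) (hJ : J.card = d) (hJc : Jᶜ.card = s - d) :
    (Fin d ⊕ Fin (s - d)) ≃ Fin s := by
  refine Equiv.ofBijective (Sum.elim (J.orderEmbOfFin hJ) (Jᶜ.orderEmbOfFin hJc)) ⟨?_, ?_⟩
  · rintro (a | a) (b | b) hab
    · simpa using (J.orderEmbOfFin hJ).injective (by simpa using hab)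
    · exfalso
      have h1 : J.orderEmbOfFin hJ a ∈ J := Finset.orderEmbOfFin_mem _ _ _
      have h2 : Jᶜ.orderEmbOfFin hJc b ∈ Jᶜ := Finset.orderEmbOfFin_mem _ _ _
      rw [Sum.elim_inl, Sum.elim_inr] at hab
      rw [hab] at h1
      exact (Finset.mem_compl.mp h2) h1
    · exfalso
      have h1 : J.orderEmbOfFin hJ b ∈ J := Finset.orderEmbOfFin_mem _ _ _
      have h2 : Jᶜ.orderEmbOfFin hJc a ∈ Jᶜ := Finset.orderEmbOfFin_mem _ _ _
      rw [Sum.elim_inl, Sum.elim_inr] at hab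
      rw [← hab] at h1
      exact (Finset.mem_compl.mp h2) h1
    · simpa using (Jᶜ.orderEmbOfFin hJc).injective (by simpa using hab)
  · intro x
    by_cases hx : x ∈ J
    · have : x ∈ Set.range (J.orderEmbOfFin hJ) := by
        rw [Finset.range_orderEmbOfFin]; exact hx
      obtain ⟨a, ha⟩ := this
      exact ⟨Sum.inl a, ha⟩
    · have : x ∈ Set.range (Jᶜ.orderEmbOfFin hJc) := by
        rw [Finset.range_orderEmbOfFin]; exact Finset.mem_compl.mpr hx
      obtain ⟨a, ha⟩ := this
      exact ⟨Sum.inr a, ha⟩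

private lemma uJ_inl (J : Finset (Fin s)) (hJ : J.card = d) (hJc : Jᶜ.card = s - d) (k : Fin d) :
    uJ J hJ hJc (Sum.inl k) = J.orderEmbOfFin hJ k := rfl

private lemma uJ_inr (J : Finset (Fin s)) (hJ : J.card = d) (hJc : Jᶜ.card = s - d)
    (k : Fin (s - d)) : uJ J hJ hJc (Sum.inr k) = Jᶜ.orderEmbOfFin hJc k := rfl

private noncomputable def pJ (hd : d ≤ s) (J : Finset (Fin s)) (hJ : J.card = d) (hJc : Jᶜ.card = s - d) :
    Perm (Fin d ⊕ Fin (s - d)) := (eqv hd).trans (uJ J hJ hJc).symm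

private lemma uJ_swap (K : Finset (Fin s)) (hK : K.card = d) (hKc : Kᶜ.card = s - d)
    (a b : Fin s) (hb : (b : ℕ) = (a : ℕ) + 1) (haK : a ∈ K) (hbK : b ∉ K)
    (hJ : (insert b (K.erase a)).card = d) (hJc : (insert b (K.erase a))ᶜ.card = s - d) :
    uJ (insert b (K.erase a)) hJ hJc = (uJ K hK hKc).trans (Equiv.swap a b) := by
  set J := insert b (K.erase a) with hJdef
  have hab : a ≠ b := fun h => by rw [h] at hb; omega
  have haJ : a ∉ J := by
    simp only [hJdef, Finset.mem_insert, Finset.mem_erase]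
    push_neg
    exact ⟨hab, fun h _ => h rfl⟩
  have hbJ : b ∈ J := Finset.mem_insert_self _ _
  apply Equiv.ext
  rintro (k | k)
  · rw [Equiv.trans_apply, uJ_inl, uJ_inl]
    have key : (fun k => Equiv.swap a b (K.orderEmbOfFin hK k)) = J.orderEmbOfFin hJ := by
      apply Finset.orderEmbOfFin_unique
      · intro x
        set y := K.orderEmbOfFin hK x with hy
        have hyK : y ∈ K := Finset.orderEmbOfFin_mem _ _ _
        have hyb : y ≠ b := fun h => hbK (h ▸ hyK)
        by_cases hya : y = a
        · rw [hya, Equiv.swap_apply_left]; exact hbJ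
        · rw [Equiv.swap_apply_of_ne_of_ne hya hyb]
          exact Finset.mem_insert_of_mem (Finset.mem_erase.mpr ⟨hya, hyK⟩)
      · intro x z hxz
        set y1 := K.orderEmbOfFin hK x with hy1
        set y2 := K.orderEmbOfFin hK z with hy2
        have h12 : y1 < y2 := (K.orderEmbOfFin hK).strictMono hxz
        have hy1K : y1 ∈ K := Finset.orderEmbOfFin_mem _ _ _
        have hy2K : y2 ∈ K := Finset.orderEmbOfFin_mem _ _ _
        have hy1b : y1 ≠ b := fun h => hbK (h ▸ hy1K)
        have hy2b : y2 ≠ b := fun h => hbK (h ▸ hy2K)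
        show Equiv.swap a b y1 < Equiv.swap a b y2
        by_cases h1a : y1 = a
        · rw [h1a, Equiv.swap_apply_left, Equiv.swap_apply_of_ne_of_ne (fun h => by
            rw [h, h1a] at h12; exact lt_irrefl _ h12) hy2b]
          have : (a : ℕ) < (y2 : ℕ) := by rw [← h1a]; exact h12
          have : (y2 : ℕ) ≠ (b : ℕ) := fun h => hy2b (Fin.ext h)
          exact Fin.lt_def.mpr (by omega)
        · by_cases h2a : y2 = a
          · rw [Equiv.swap_apply_of_ne_of_ne h1a hy1b, h2a, Equiv.swap_apply_left]
            have : (y1 : ℕ) < (a : ℕ) := by rw [← h2a] at *; exact h12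
            exact Fin.lt_def.mpr (by omega)
          · rw [Equiv.swap_apply_of_ne_of_ne h1a hy1b,
              Equiv.swap_apply_of_ne_of_ne h2a hy2b]
            exact h12
    rw [← key]
  · rw [Equiv.trans_apply, uJ_inr, uJ_inr]
    have key : (fun k => Equiv.swap a b (Kᶜ.orderEmbOfFin hKc k)) = Jᶜ.orderEmbOfFin hJc := by
      apply Finset.orderEmbOfFin_unique
      · intro x
        set y := Kᶜ.orderEmbOfFin hKc x with hy
        have hyKc : y ∈ Kᶜ := Finset.orderEmbOfFin_mem _ _ _
        have hyK : y ∉ K := Finset.mem_compl.mp hyKc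
        have hya : y ≠ a := fun h => hyK (h ▸ haK)
        by_cases hyb : y = b
        · rw [hyb, Equiv.swap_apply_right]; exact Finset.mem_compl.mpr haJ
        · rw [Equiv.swap_apply_of_ne_of_ne hya hyb]
          refine Finset.mem_compl.mpr ?_
          simp only [hJdef, Finset.mem_insert, Finset.mem_erase]
          push_neg
          exact ⟨hyb, fun _ => hyK⟩
      · intro x z hxz
        set y1 := Kᶜ.orderEmbOfFin hKc x with hy1
        set y2 := Kᶜ.orderEmbOfFin hKc z with hy2
        have h12 : y1 < y2 := (Kᶜ.orderEmbOfFin hKc).strictMono hxz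
        have hy1K : y1 ∉ K := Finset.mem_compl.mp (Finset.orderEmbOfFin_mem _ _ _)
        have hy2K : y2 ∉ K := Finset.mem_compl.mp (Finset.orderEmbOfFin_mem _ _ _)
        have hy1a : y1 ≠ a := fun h => hy1K (h ▸ haK)
        have hy2a : y2 ≠ a := fun h => hy2K (h ▸ haK)
        show Equiv.swap a b y1 < Equiv.swap a b y2
        by_cases h1b : y1 = b
        · rw [h1b, Equiv.swap_apply_right, Equiv.swap_apply_of_ne_of_ne hy2a (fun h => by
            rw [h, h1b] at h12; exact lt_irrefl _ h12)]
          have : (b : ℕ) < (y2 : ℕ) := by rw [← h1b]; exact h12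
          exact Fin.lt_def.mpr (by omega)
        · by_cases h2b : y2 = b
          · rw [Equiv.swap_apply_of_ne_of_ne hy1a h1b, h2b, Equiv.swap_apply_right]
            have h1 : (y1 : ℕ) < (b : ℕ) := by rw [← h2b] at *; exact h12
            have h2 : (y1 : ℕ) ≠ (a : ℕ) := fun h => hy1a (Fin.ext h)
            exact Fin.lt_def.mpr (by omega)
          · rw [Equiv.swap_apply_of_ne_of_ne hy1a h1b,
              Equiv.swap_apply_of_ne_of_ne hy2a h2b]
            exact h12
    rw [← key]

private lemma sign_pJ_step (hd : d ≤ s) (K : Finset (Fin s)) (hK : K.card = d)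
    (hKc : Kᶜ.card = s - d) (a b : Fin s) (hb : (b : ℕ) = (a : ℕ) + 1) (haK : a ∈ K)
    (hbK : b ∉ K) (hJ : (insert b (K.erase a)).card = d)
    (hJc : (insert b (K.erase a))ᶜ.card = s - d) :
    Equiv.Perm.sign (pJ hd (insert b (K.erase a)) hJ hJc) =
      - Equiv.Perm.sign (pJ hd K hK hKc) := by
  have hab : a ≠ b := fun h => by rw [h] at hb; omega
  have hw : pJ hd (insert b (K.erase a)) hJ hJc =
      ((eqv hd).symm.permCongr (Equiv.swap a b)).trans (pJ hd K hK hKc) := by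
    apply Equiv.ext
    intro x
    simp [pJ, uJ_swap K hK hKc a b hb haK hbK hJ hJc, Equiv.permCongr_apply]
  rw [hw, Equiv.Perm.sign_trans, Equiv.Perm.sign_permCongr, Equiv.Perm.sign_swap hab]
  simp

private lemma pJ_congr (hd : d ≤ s) {L L' : Finset (Fin s)} (h : L = L')
    (hL : L.card = d) (hLc : Lᶜ.card = s - d) :
    pJ hd L hL hLc = pJ hd L' (h ▸ hL) (h ▸ hLc) := by subst h; rfl

private lemma downclosed_eq_range (T : Finset ℕ) (h : ∀ n, n + 1 ∈ T → n ∈ T) :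
    T = Finset.range T.card := by
  have key : ∀ m, m ∈ T → Finset.range (m + 1) ⊆ T := by
    intro m
    induction m with
    | zero => intro hm k hk; simp at hk; exact hk ▸ hm
    | succ m ih =>
      intro hm k hk
      rw [Finset.mem_range] at hk
      by_cases hkm : k = m + 1
      · exact hkm ▸ hm
      · exact ih (h m hm) (Finset.mem_range.mpr (by omega))

  have hsub : T ⊆ Finset.range T.card := by
    intro m hm
    have := Finset.card_le_card (key m hm)
    rw [Finset.card_range] at this
    exact Finset.mem_range.mpr (by omega)
  exact Finset.eq_of_subset_of_card_le hsub (by rw [Finset.card_range])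

private lemma card_compl_eq (J : Finset (Fin s)) (hJ : J.card = d) (hd : d ≤ s) :
    Jᶜ.card = s - d := by
  rw [Finset.card_compl, hJ]
  simp

private lemma signP_const (hd : d ≤ s) (J : Finset (Fin s)) (hJ : J.card = d)
    (hJc : Jᶜ.card = s - d) (K : Finset (Fin s)) (hK : K.card = d) (hKc : Kᶜ.card = s - d) :
    ((Equiv.Perm.sign (pJ hd J hJ hJc) : ℤ) : ℝ) * (-1) ^ (∑ j ∈ J, (j : ℕ)) =
    ((Equiv.Perm.sign (pJ hd K hK hKc) : ℤ) : ℝ) * (-1) ^ (∑ j ∈ K, (j : ℕ)) := by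
  have hd0 : ∀ m ∈ Finset.range d, m < s := fun m hm => by
    rw [Finset.mem_range] at hm; omega
  set J₀ : Finset (Fin s) := (Finset.range d).attachFin hd0 with hJ₀def
  have hJ₀ : J₀.card = d := by rw [hJ₀def, Finset.card_attachFin, Finset.card_range]
  have hJ₀c : J₀ᶜ.card = s - d := card_compl_eq _ hJ₀ hd
  suffices main : ∀ (n : ℕ) (L : Finset (Fin s)) (hL : L.card = d) (hLc : Lᶜ.card = s - d),
      (∑ j ∈ L, (j : ℕ)) = n →
      ((Equiv.Perm.sign (pJ hd L hL hLc) : ℤ) : ℝ) * (-1) ^ (∑ j ∈ L, (j : ℕ)) =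
      ((Equiv.Perm.sign (pJ hd J₀ hJ₀ hJ₀c) : ℤ) : ℝ) * (-1) ^ (∑ j ∈ J₀, (j : ℕ)) by
    rw [main _ J hJ hJc rfl, main _ K hK hKc rfl]
  intro n
  induction n using Nat.strong_induction_on with
  | _ n ih =>
    intro L hL hLc hsum
    by_cases hL0 : L = J₀
    · subst hL0; rfl
    · -- find b ∈ L with positive value whose predecessor is not in L
      have hex : ∃ b ∈ L, 0 < (b : ℕ) ∧ ⟨(b : ℕ) - 1, by omega⟩ ∉ L := by
        by_contra hcon
        push_neg at hcon
        apply hL0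
        have hdown : ∀ m, m + 1 ∈ L.image Fin.val → m ∈ L.image Fin.val := by
          intro m hm
          rw [Finset.mem_image] at hm
          obtain ⟨b, hbL, hbv⟩ := hm
          have := hcon b hbL (by omega)
          rw [Finset.mem_image]
          exact ⟨⟨(b : ℕ) - 1, by omega⟩, this, by simp [hbv]⟩
        have hcard : (L.image Fin.val).card = d := by
          rw [Finset.card_image_of_injective _ Fin.val_injective, hL]
        have hrange := downclosed_eq_range _ hdown
        rw [hcard] at hrange
        ext x
        rw [hJ₀def, Finset.mem_attachFin, ← hrange, Finset.mem_image]
        constructor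
        · intro hx; exact ⟨x, hx, rfl⟩
        · rintro ⟨y, hy, hyx⟩; exact (Fin.val_injective hyx) ▸ hy
      obtain ⟨b, hbL, hbpos, hprev⟩ := hex
      set a : Fin s := ⟨(b : ℕ) - 1, by omega⟩ with hadef
      have hba : (b : ℕ) = (a : ℕ) + 1 := by simp [hadef]; omega
      have hab : a ≠ b := fun h => by rw [h] at hba; omega
      set K' := insert a (L.erase b) with hK'def
      have haK' : a ∈ K' := Finset.mem_insert_self _ _
      have hbK' : b ∉ K' := by
        simp only [hK'def, Finset.mem_insert, Finset.mem_erase]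
        push_neg
        exact ⟨fun h => hab h.symm, fun h _ => h rfl⟩
      have hK' : K'.card = d := by
        rw [hK'def, Finset.card_insert_of_notMem (fun h => hprev (Finset.mem_of_mem_erase h)),
          Finset.card_erase_of_mem hbL, hL]
        have : 1 ≤ d := by
          rw [← hL]; exact Finset.card_pos.mpr ⟨b, hbL⟩
        omega
      have hK'c : K'ᶜ.card = s - d := card_compl_eq _ hK' hd
      have hLK : L = insert b (K'.erase a) := by
        rw [hK'def, Finset.erase_insert (fun h => hprev (Finset.mem_of_mem_erase h)),
          Finset.insert_erase hbL]
      have hsumK : (∑ j ∈ K', (j : ℕ)) + 1 = n := by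
        have h1 : (b : ℕ) + ∑ j ∈ L.erase b, (j : ℕ) = n := by
          rw [Finset.add_sum_erase _ _ hbL]; exact hsum
        have h2 : (∑ j ∈ K', (j : ℕ)) = (a : ℕ) + ∑ j ∈ L.erase b, (j : ℕ) := by
          rw [hK'def, Finset.sum_insert (fun h => hprev (Finset.mem_of_mem_erase h))]
        omega
      have hsign : Equiv.Perm.sign (pJ hd L hL hLc) =
          - Equiv.Perm.sign (pJ hd K' hK' hK'c) := by
        rw [pJ_congr hd hLK hL hLc]
        exact sign_pJ_step hd K' hK' hK'c a b hba haK' hbK' _ _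
      have hihK := ih (∑ j ∈ K', (j : ℕ)) (by omega) K' hK' hK'c rfl
      rw [hsign, hsum, ← hsumK] at *
      push_cast
      rw [pow_succ]
      push_cast at hihK
      nlinarith [hihK]

private lemma det_ne_zero_of_rank_eq {n : ℕ} (A : Matrix (Fin n) (Fin n) ℝ) (h : A.rank = n) :
    A.det ≠ 0 := by
  intro hdet
  obtain ⟨v, hv, hAv⟩ := (Matrix.exists_mulVec_eq_zero_iff).mpr hdet
  have hrange : LinearMap.range A.mulVecLin = ⊤ := by
    apply Submodule.eq_top_of_finrank_eq
    rw [← Matrix.rank, h]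
    simp [Module.finrank_fintype_fun_eq_card]
  have hsurj : Function.Surjective A.mulVecLin := LinearMap.range_eq_top.mp hrange
  have hinj : Function.Injective A.mulVecLin :=
    (LinearMap.injective_iff_surjective).mpr hsurj
  exact hv (hinj (by simpa [Matrix.mulVecLin_apply] using hAv))

private lemma dualB (hd : d ≤ s) (M : Matrix (Fin s) (Fin (s - d)) ℝ)
    (Mp : Matrix (Fin d) (Fin s) ℝ) (hM : M.rank = s - d) (hMp : Mp.rank = d)
    (ho : Mp * M = 0) :
    ∃ c : ℝ, c ≠ 0 ∧ ∀ (J : Finset (Fin s)) (hJ : J.card = d) (hJc : Jᶜ.card = s - d),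
      (Mp.submatrix id (J.orderEmbOfFin hJ)).det =
        c * ((Equiv.Perm.sign (pJ hd J hJ hJc) : ℤ) : ℝ) *
          (Mᵀ.submatrix id (Jᶜ.orderEmbOfFin hJc)).det := by
  set C : Matrix (Fin d ⊕ Fin (s - d)) (Fin s) ℝ := fromRows Mp Mᵀ with hCdef
  have hCC : C * Cᵀ = fromBlocks (Mp * Mpᵀ) 0 0 (Mᵀ * M) := by
    rw [hCdef, transpose_fromRows, fromRows_mul_fromCols, transpose_transpose, ho,
      ← transpose_mul, ho, transpose_zero]
  have hdetG : (Mᵀ * M).det ≠ 0 := by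
    apply det_ne_zero_of_rank_eq
    rw [Matrix.rank_transpose_mul_self, hM]
  have hdetP : (Mp * Mpᵀ).det ≠ 0 := by
    apply det_ne_zero_of_rank_eq
    rw [Matrix.rank_self_mul_transpose, hMp]
  set c₀ : ℝ := (C.submatrix id (eqv hd)).det with hc₀def
  have hc₀ : c₀ ≠ 0 := by
    intro h0
    have hmul : (C.submatrix id (eqv hd)) * (Cᵀ.submatrix (eqv hd) id) = C * Cᵀ := by
      rw [Matrix.submatrix_mul_equiv, Matrix.submatrix_id_id]
    have := congrArg Matrix.det hmul
    rw [Matrix.det_mul, ← hc₀def, h0, zero_mul, hCC, Matrix.det_fromBlocks_zero₁₂] at this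
    exact (mul_ne_zero hdetP hdetG) this.symm
  refine ⟨c₀ / (Mᵀ * M).det, div_ne_zero hc₀ hdetG, ?_⟩
  intro J hJ hJc
  set E : Matrix (Fin s) (Fin d) ℝ :=
    (1 : Matrix (Fin s) (Fin s) ℝ).submatrix id (J.orderEmbOfFin hJ) with hEdef
  set D : Matrix (Fin s) (Fin d ⊕ Fin (s - d)) ℝ := fromCols E M with hDdef
  have hMpE : Mp * E = Mp.submatrix id (J.orderEmbOfFin hJ) := by
    ext i j
    simp [hEdef, Matrix.mul_apply, Matrix.one_apply]
  have hMtE : Mᵀ * E = Mᵀ.submatrix id (J.orderEmbOfFin hJ) := by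
    ext i j
    simp [hEdef, Matrix.mul_apply, Matrix.one_apply]
  have h1 : C * D = fromBlocks (Mp.submatrix id (J.orderEmbOfFin hJ)) 0
      (Mᵀ.submatrix id (J.orderEmbOfFin hJ)) (Mᵀ * M) := by
    rw [hCdef, hDdef, fromRows_mul_fromCols, hMpE, hMtE, ho]
  have h3 : D.submatrix (uJ J hJ hJc) id =
      fromBlocks 1 (M.submatrix (J.orderEmbOfFin hJ) id)
        0 (M.submatrix (Jᶜ.orderEmbOfFin hJc) id) := by
    ext (i | i) (j | j)
    · simp only [hDdef, Matrix.submatrix_apply, uJ_inl, fromCols_apply_inl,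
        hEdef, fromBlocks_apply₁₁, id_eq]
      rw [Matrix.one_apply, Matrix.one_apply]
      simp [(J.orderEmbOfFin hJ).injective.eq_iff]
    · simp [hDdef, Matrix.submatrix_apply, uJ_inl, fromCols_apply_inr, hEdef]
    · simp only [hDdef, Matrix.submatrix_apply, uJ_inr, fromCols_apply_inl,
        hEdef, fromBlocks_apply₂₁, Matrix.zero_apply, id_eq]
      apply Matrix.one_apply_ne
      intro h
      have h1 : Jᶜ.orderEmbOfFin hJc i ∈ Jᶜ := Finset.orderEmbOfFin_mem _ _ _
      have h2 : J.orderEmbOfFin hJ j ∈ J := Finset.orderEmbOfFin_mem _ _ _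
      simp only [id_eq] at h
      rw [h] at h1
      exact (Finset.mem_compl.mp h1) h2
    · simp [hDdef, Matrix.submatrix_apply, uJ_inr, fromCols_apply_inr]
  have h4 : (D.submatrix (eqv hd) id).det =
      ((Equiv.Perm.sign (pJ hd J hJ hJc) : ℤ) : ℝ) * (D.submatrix (uJ J hJ hJc) id).det := by
    have he : D.submatrix (eqv hd) id =
        (D.submatrix (uJ J hJ hJc) id).submatrix (pJ hd J hJ hJc) id := by
      ext i j
      simp [pJ, Matrix.submatrix_apply]
    rw [he, Matrix.det_permute]
  have hCD : (C * D).det = c₀ * (D.submatrix (eqv hd) id).det := by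
    have hmm := Matrix.submatrix_mul_equiv C D id (eqv hd) id
    rw [Matrix.submatrix_id_id] at hmm
    rw [← hmm, Matrix.det_mul, hc₀def]
  have hblock : (C * D).det =
      (Mp.submatrix id (J.orderEmbOfFin hJ)).det * (Mᵀ * M).det := by
    rw [h1, Matrix.det_fromBlocks_zero₁₂]
  have hDdet : (D.submatrix (uJ J hJ hJc) id).det =
      (Mᵀ.submatrix id (Jᶜ.orderEmbOfFin hJc)).det := by
    rw [h3, Matrix.det_fromBlocks_zero₂₁, Matrix.det_one, one_mul,
      ← Matrix.det_transpose, Matrix.transpose_submatrix]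
  have := hblock.symm.trans hCD
  rw [h4, hDdet] at this
  field_simp
  linarith [this]

private lemma neg_one_sq_pow (k : ℕ) : (-1 : ℝ) ^ k * (-1 : ℝ) ^ k = 1 := by
  rw [← mul_pow]; norm_num

private lemma dual (hd : d ≤ s) (M : Matrix (Fin s) (Fin (s - d)) ℝ)
    (Mp : Matrix (Fin d) (Fin s) ℝ) (hM : M.rank = s - d) (hMp : Mp.rank = d)
    (ho : Mp * M = 0) :
    ∃ c : ℝ, c ≠ 0 ∧ ∀ (J : Finset (Fin s)) (hJ : J.card = d) (hJc : Jᶜ.card = s - d),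
      (Mp.submatrix id (J.orderEmbOfFin hJ)).det =
        c * (-1 : ℝ) ^ (∑ j ∈ J, ((j : ℕ) + 1)) *
          (Mᵀ.submatrix id (Jᶜ.orderEmbOfFin hJc)).det := by
  obtain ⟨c, hc, hrel⟩ := dualB hd M Mp hM hMp ho
  obtain ⟨K₀, _, hK₀⟩ := Finset.exists_subset_card_eq
    (show d ≤ (Finset.univ : Finset (Fin s)).card by simp [hd])
  have hK₀c : K₀ᶜ.card = s - d := card_compl_eq _ hK₀ hd
  set κ : ℝ := ((Equiv.Perm.sign (pJ hd K₀ hK₀ hK₀c) : ℤ) : ℝ) *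
    (-1) ^ (∑ j ∈ K₀, (j : ℕ)) with hκdef
  have hsgn : ((Equiv.Perm.sign (pJ hd K₀ hK₀ hK₀c) : ℤ) : ℝ) = 1 ∨
      ((Equiv.Perm.sign (pJ hd K₀ hK₀ hK₀c) : ℤ) : ℝ) = -1 := by
    rcases Int.units_eq_one_or (Equiv.Perm.sign (pJ hd K₀ hK₀ hK₀c)) with h | h <;>
      rw [h] <;> simp
  have hκ : κ = 1 ∨ κ = -1 := by
    rcases hsgn with h | h <;> rw [hκdef, h] <;>
      rcases Nat.even_or_odd (∑ j ∈ K₀, (j : ℕ)) with he | he <;>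
        simp [he.neg_one_pow] <;> omega
  have hκ0 : κ ≠ 0 := by rcases hκ with h | h <;> rw [h] <;> norm_num
  refine ⟨c * κ * (-1) ^ d, by
    apply mul_ne_zero (mul_ne_zero hc hκ0); positivity, ?_⟩
  intro J hJ hJc
  have hsignJ : ((Equiv.Perm.sign (pJ hd J hJ hJc) : ℤ) : ℝ) =
      κ * (-1) ^ (∑ j ∈ J, (j : ℕ)) := by
    have := signP_const hd J hJ hJc K₀ hK₀ hK₀c
    rw [← hκdef] at this
    have h2 := congrArg (· * (-1 : ℝ) ^ (∑ j ∈ J, (j : ℕ))) this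
    rw [mul_assoc, neg_one_sq_pow, mul_one] at h2
    exact h2
  have hexp : (∑ j ∈ J, ((j : ℕ) + 1)) = (∑ j ∈ J, (j : ℕ)) + d := by
    rw [Finset.sum_add_distrib, Finset.sum_const, smul_eq_mul, mul_one, hJ]
  rw [hrel J hJ hJc, hsignJ, hexp, pow_add]
  have hsq := neg_one_sq_pow d
  linear_combination (-(c * κ * (-1 : ℝ) ^ (∑ j ∈ J, (j : ℕ)) *
    (Mᵀ.submatrix id ⇑(Jᶜ.orderEmbOfFin hJc)).det)) * hsq

private lemma sign_const_mul (c : ℝ) (hc : c ≠ 0) (x : ℝ) :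
    Real.sign (c * x) = Real.sign c * Real.sign x := by
  rcases lt_trichotomy c 0 with h | h | h
  · rcases lt_trichotomy x 0 with h2 | h2 | h2
    · rw [Real.sign_of_neg h, Real.sign_of_neg h2, Real.sign_of_pos (mul_pos_of_neg_of_neg h h2)]
      norm_num
    · simp [h2, Real.sign_zero, Real.sign_of_neg h]
    · rw [Real.sign_of_neg h, Real.sign_of_pos h2, Real.sign_of_neg (mul_neg_of_neg_of_pos h h2)]
      norm_num
  · exact absurd h hc
  · rcases lt_trichotomy x 0 with h2 | h2 | h2
    · rw [Real.sign_of_pos h, Real.sign_of_neg h2, Real.sign_of_neg (mul_neg_of_pos_of_neg h h2)]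
      norm_num
    · simp [h2, Real.sign_zero]
    · rw [Real.sign_of_pos h, Real.sign_of_pos h2, Real.sign_of_pos (mul_pos h h2)]
      norm_num

private lemma emb_congr {J K : Finset (Fin s)} (h : J = K) {k : ℕ} (hJ : J.card = k)
    (hK : K.card = k) : ⇑(J.orderEmbOfFin hJ) = ⇑(K.orderEmbOfFin hK) := by subst h; rfl

private lemma sign_combineU (c x y : ℝ) (hc : c ≠ 0) (k : ℕ) :
    Real.sign ((-1 : ℝ) ^ k * ((c * (-1) ^ k * x) * y)) = Real.sign c * Real.sign (x * y) := by
  have h : (-1 : ℝ) ^ k * ((c * (-1) ^ k * x) * y) = c * (x * y) := by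
    linear_combination (c * x * y) * (neg_one_sq_pow k)
  rw [h, sign_const_mul c hc]

private lemma sign_combineL (c x y : ℝ) (hc : c ≠ 0) (k : ℕ) :
    Real.sign ((-1 : ℝ) ^ k * (x * (c * (-1) ^ k * y))) = Real.sign c * Real.sign (x * y) := by
  have h : (-1 : ℝ) ^ k * (x * (c * (-1) ^ k * y)) = c * (x * y) := by
    linear_combination (c * x * y) * (neg_one_sq_pow k)
  rw [h, sign_const_mul c hc]

private lemma sign_combineUL (c c' x y : ℝ) (hc : c ≠ 0) (hc' : c' ≠ 0) (k : ℕ) :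
    Real.sign ((c * (-1) ^ k * x) * (c' * (-1) ^ k * y)) =
      Real.sign (c * c') * Real.sign (x * y) := by
  have h : (c * (-1) ^ k * x) * (c' * (-1) ^ k * y) = (c * c') * (x * y) := by
    linear_combination (c * c' * x * y) * (neg_one_sq_pow k)
  rw [h, sign_const_mul (c * c') (mul_ne_zero hc hc')]

private lemma set_transfer (S : Set ℝ) (hS : S.Nonempty) (ε : ℝ) (hε : ε = 1 ∨ ε = -1) :
    ((fun t => ε * t) '' S ≠ {0} ↔ S ≠ {0}) ∧
    (((-1) ∈ (fun t => ε * t) '' S ∧ 1 ∈ (fun t => ε * t) '' S) ↔ ((-1) ∈ S ∧ 1 ∈ S)) := by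
  rcases hε with h | h <;> subst h
  · simp
  · have himg : ∀ y : ℝ, y ∈ (fun t => (-1 : ℝ) * t) '' S ↔ -y ∈ S := by
      intro y
      constructor
      · rintro ⟨x, hx, rfl⟩; simpa using hx
      · intro hy; exact ⟨-y, hy, by ring⟩
    constructor
    · have hiff : (fun t => (-1 : ℝ) * t) '' S = {0} ↔ S = {0} := by
        constructor
        · intro h
          ext y
          simp only [Set.mem_singleton_iff]
          constructor
          · intro hyS
            have h1 : (-1 : ℝ) * y ∈ (fun t => (-1 : ℝ) * t) '' S := ⟨y, hyS, rfl⟩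
            rw [h, Set.mem_singleton_iff] at h1
            linarith
          · rintro rfl
            obtain ⟨x, hx⟩ := hS
            have h1 : (-1 : ℝ) * x ∈ (fun t => (-1 : ℝ) * t) '' S := ⟨x, hx, rfl⟩
            rw [h, Set.mem_singleton_iff] at h1
            have : x = 0 := by linarith
            exact this ▸ hx
        · intro h
          rw [h]
          ext y
          simp only [Set.mem_image, Set.mem_singleton_iff]
          constructor
          · rintro ⟨x, rfl, rfl⟩; ring
          · rintro rfl; exact ⟨0, rfl, by ring⟩
      exact not_congr hiff
    · rw [himg (-1), himg 1]
      norm_num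
      tauto

end Stmt12Aux

/-- for matrices `M`, `B` of full column rank `s − d` and
matrices `M^⊥`, `B^⊥` whose rows form bases of the respective orthogonal
complements, the four sign sets `Σ`, `Σ^⊥`, `Σ_⊥`, `Σ^⊥_⊥` are
simultaneously `≠ {0}`, and in that case simultaneously mixed. -/
theorem stmt12 {s d : ℕ} (hd : d ≤ s)
    (M B : Matrix (Fin s) (Fin (s - d)) ℝ)
    (Mp Bp : Matrix (Fin d) (Fin s) ℝ)
    (hMrank : M.rank = s - d) (hBrank : B.rank = s - d)
    (hMprank : Mp.rank = d) (hBprank : Bp.rank = d)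
    (hMo : Mp * M = 0) (hBo : Bp * B = 0) :
    let Sig : Set ℝ := {t | ∃ I : Finset (Fin s), ∃ hI : I.card = s - d,
      t = Real.sign ((M.transpose.submatrix id (I.orderEmbOfFin hI)).det *
                     (B.transpose.submatrix id (I.orderEmbOfFin hI)).det)}
    let SigU : Set ℝ := {t | ∃ J : Finset (Fin s), ∃ hJ : J.card = d,
      ∃ hJc : Jᶜ.card = s - d,
      t = Real.sign ((-1 : ℝ) ^ (∑ j ∈ J, ((j : ℕ) + 1)) *
        ((Mp.submatrix id (J.orderEmbOfFin hJ)).det *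
         (B.transpose.submatrix id (Jᶜ.orderEmbOfFin hJc)).det))}
    let SigL : Set ℝ := {t | ∃ J : Finset (Fin s), ∃ hJ : J.card = d,
      ∃ hJc : Jᶜ.card = s - d,
      t = Real.sign ((-1 : ℝ) ^ (∑ j ∈ J, ((j : ℕ) + 1)) *
        ((M.transpose.submatrix id (Jᶜ.orderEmbOfFin hJc)).det *
         (Bp.submatrix id (J.orderEmbOfFin hJ)).det))}
    let SigUL : Set ℝ := {t | ∃ J : Finset (Fin s), ∃ hJ : J.card = d,
      t = Real.sign ((Mp.submatrix id (J.orderEmbOfFin hJ)).det *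
        (Bp.submatrix id (J.orderEmbOfFin hJ)).det)}
    ((Sig ≠ {0} ∨ SigU ≠ {0} ∨ SigL ≠ {0} ∨ SigUL ≠ {0}) →
      (Sig ≠ {0} ∧ SigU ≠ {0} ∧ SigL ≠ {0} ∧ SigUL ≠ {0})) ∧
    ((Sig ≠ {0} ∨ SigU ≠ {0} ∨ SigL ≠ {0} ∨ SigUL ≠ {0}) →
      ((-1 ∈ Sig ∧ 1 ∈ Sig) ∨ (-1 ∈ SigU ∧ 1 ∈ SigU) ∨
       (-1 ∈ SigL ∧ 1 ∈ SigL) ∨ (-1 ∈ SigUL ∧ 1 ∈ SigUL)) →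
      ((-1 ∈ Sig ∧ 1 ∈ Sig) ∧ (-1 ∈ SigU ∧ 1 ∈ SigU) ∧
       (-1 ∈ SigL ∧ 1 ∈ SigL) ∧ (-1 ∈ SigUL ∧ 1 ∈ SigUL))) := by
  intro Sig SigU SigL SigUL
  obtain ⟨cM, hcM, hMrel⟩ := dual hd M Mp hMrank hMprank hMo
  obtain ⟨cB, hcB, hBrel⟩ := dual hd B Bp hBrank hBprank hBo
  -- Sig is nonempty
  obtain ⟨I₀, _, hI₀⟩ := Finset.exists_subset_card_eq
    (show s - d ≤ (Finset.univ : Finset (Fin s)).card by simp)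
  have hne : Sig.Nonempty :=
    ⟨_, ⟨I₀, hI₀, rfl⟩⟩
  -- compl card facts
  have hcardc : ∀ I : Finset (Fin s), I.card = s - d → Iᶜ.card = d := by
    intro I hI
    rw [Finset.card_compl, hI]
    simp
    omega
  -- the three image identities
  have hU : SigU = (fun t => Real.sign cM * t) '' Sig := by
    ext t
    constructor
    · rintro ⟨J, hJ, hJc, rfl⟩
      refine ⟨_, ⟨Jᶜ, hJc, rfl⟩, ?_⟩
      rw [hMrel J hJ hJc, sign_combineU _ _ _ hcM]
    · rintro ⟨x, ⟨I, hI, rfl⟩, rfl⟩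
      have hJ : Iᶜ.card = d := hcardc I hI
      have hJc : Iᶜᶜ.card = s - d := by rw [compl_compl]; exact hI
      refine ⟨Iᶜ, hJ, hJc, ?_⟩
      rw [hMrel Iᶜ hJ hJc,
        emb_congr (compl_compl I) hJc hI, sign_combineU _ _ _ hcM]
  have hL : SigL = (fun t => Real.sign cB * t) '' Sig := by
    ext t
    constructor
    · rintro ⟨J, hJ, hJc, rfl⟩
      refine ⟨_, ⟨Jᶜ, hJc, rfl⟩, ?_⟩
      rw [hBrel J hJ hJc, sign_combineL _ _ _ hcB]
    · rintro ⟨x, ⟨I, hI, rfl⟩, rfl⟩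
      have hJ : Iᶜ.card = d := hcardc I hI
      have hJc : Iᶜᶜ.card = s - d := by rw [compl_compl]; exact hI
      refine ⟨Iᶜ, hJ, hJc, ?_⟩
      rw [hBrel Iᶜ hJ hJc,
        emb_congr (compl_compl I) hJc hI, sign_combineL _ _ _ hcB]
  have hUL : SigUL = (fun t => Real.sign (cM * cB) * t) '' Sig := by
    ext t
    constructor
    · rintro ⟨J, hJ, rfl⟩
      have hJc : Jᶜ.card = s - d := card_compl_eq _ hJ hd
      refine ⟨_, ⟨Jᶜ, hJc, rfl⟩, ?_⟩
      rw [hMrel J hJ hJc, hBrel J hJ hJc, sign_combineUL _ _ _ _ hcM hcB]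
    · rintro ⟨x, ⟨I, hI, rfl⟩, rfl⟩
      have hJ : Iᶜ.card = d := hcardc I hI
      have hJc : Iᶜᶜ.card = s - d := by rw [compl_compl]; exact hI
      refine ⟨Iᶜ, hJ, ?_⟩
      rw [hMrel Iᶜ hJ hJc, hBrel Iᶜ hJ hJc,
        emb_congr (compl_compl I) hJc hI, sign_combineUL _ _ _ _ hcM hcB]
  -- sign values
  have hsM : Real.sign cM = 1 ∨ Real.sign cM = -1 :=
    (Real.sign_apply_eq_of_ne_zero cM hcM).symm
  have hsB : Real.sign cB = 1 ∨ Real.sign cB = -1 :=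
    (Real.sign_apply_eq_of_ne_zero cB hcB).symm
  have hsMB : Real.sign (cM * cB) = 1 ∨ Real.sign (cM * cB) = -1 :=
    (Real.sign_apply_eq_of_ne_zero _ (mul_ne_zero hcM hcB)).symm
  obtain ⟨TU1, TU2⟩ := set_transfer Sig hne (Real.sign cM) hsM
  obtain ⟨TL1, TL2⟩ := set_transfer Sig hne (Real.sign cB) hsB
  obtain ⟨TUL1, TUL2⟩ := set_transfer Sig hne (Real.sign (cM * cB)) hsMB
  rw [← hU] at TU1 TU2
  rw [← hL] at TL1 TL2
  rw [← hUL] at TUL1 TUL2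
  constructor
  · intro h
    have hSig : Sig ≠ {0} := by
      rcases h with h | h | h | h
      · exact h
      · exact TU1.mp h
      · exact TL1.mp h
      · exact TUL1.mp h
    exact ⟨hSig, TU1.mpr hSig, TL1.mpr hSig, TUL1.mpr hSig⟩
  · intro _ hmix
    have hSig : (-1 ∈ Sig ∧ 1 ∈ Sig) := by
      rcases hmix with h | h | h | h
      · exact h
      · exact TU2.mp h
      · exact TL2.mp h
      · exact TUL2.mp h
    exact ⟨hSig, TU2.mpr hSig, TL2.mpr hSig, TUL2.mpr hSig⟩
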